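/- Suppose there exists γ* ∈ ℝ₊^m with A(1,γ*) ≻ 0. Then Γ equals the closed conic hull of the set {(1,γ) : γ ∈ Γ₁}, where Γ₁ := {γ ∈ ℝ₊^m : A(1,γ) ⪰ 0}. -/

import Mathlib

noncomputable section
open Matrix Set

/-- Dot-product style inner product on `ℝ × (Fin m → ℝ)` (i.e. `ℝ^{1+m}`). -/
def ipr {m : ℕ} (v w : ℝ × (Fin m → ℝ)) : ℝ := v.1 * w.1 + v.2 ⬝ᵥ w.2

/-- `A(γ₀, γ) = γ₀ A₀ + ∑ i, γ i • A i`. -/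
def Amix {ι : Type*} [Fintype ι] {m : ℕ} (A0 : Matrix ι ι ℝ)
    (A : Fin m → Matrix ι ι ℝ) (g0 : ℝ) (g : Fin m → ℝ) : Matrix ι ι ℝ :=
  g0 • A0 + ∑ i, g i • A i

/-- `b(γ) = b₀ + ∑ i, γ i • b i` (the `γ₀ = 1` slice). -/
def bmix {ι : Type*} {m : ℕ} (b0 : ι → ℝ) (b : Fin m → ι → ℝ) (g : Fin m → ℝ) : ι → ℝ :=
  b0 + ∑ i, g i • b i

/-- The cone of convex Lagrange multipliers `Γ`. -/
def Gamma {ι : Type*} [Fintype ι] {m : ℕ} (A0 : Matrix ι ι ℝ)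
    (A : Fin m → Matrix ι ι ℝ) : Set (ℝ × (Fin m → ℝ)) :=
  {p | 0 ≤ p.1 ∧ (∀ i, 0 ≤ p.2 i) ∧ (Amix A0 A p.1 p.2).PosSemidef}

/-- The slice `Γ₁` of `Γ` at `γ₀ = 1`. -/
def Gamma1 {ι : Type*} [Fintype ι] {m : ℕ} (A0 : Matrix ι ι ℝ)
    (A : Fin m → Matrix ι ι ℝ) : Set (Fin m → ℝ) :=
  {g | (∀ i, 0 ≤ g i) ∧ (Amix A0 A 1 g).PosSemidef}

/-- Polar cone with respect to `ipr`. -/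
def polarCone {m : ℕ} (S : Set (ℝ × (Fin m → ℝ))) : Set (ℝ × (Fin m → ℝ)) :=
  {v | ∀ w ∈ S, ipr v w ≤ 0}

/-- The quadratic function `x ↦ xᵀ M x + 2 bᵀ x + c`. -/
def quadF {ι : Type*} [Fintype ι] (M : Matrix ι ι ℝ) (b : ι → ℝ) (c : ℝ) (x : ι → ℝ) : ℝ :=
  x ⬝ᵥ M.mulVec x + 2 * (b ⬝ᵥ x) + c

/-- The vector `q(x) = (q₀(x), q₁(x), …, q_m(x)) ∈ ℝ^{1+m}`. -/
def qVec {ι : Type*} [Fintype ι] {m : ℕ} (A0 : Matrix ι ι ℝ) (b0 : ι → ℝ) (c0 : ℝ)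
    (A : Fin m → Matrix ι ι ℝ) (b : Fin m → ι → ℝ) (c : Fin m → ℝ)
    (x : ι → ℝ) : ℝ × (Fin m → ℝ) :=
  (quadF A0 b0 c0 x, fun i => quadF (A i) (b i) (c i) x)

/-- The first unit vector `e₀ ∈ ℝ^{1+m}`. -/
def e0 {m : ℕ} : ℝ × (Fin m → ℝ) := (1, 0)

/-- `[γ, q(x)] = q₀(x) + ∑ i, γ i * q i (x)`. -/
def brkt {ι : Type*} [Fintype ι] {m : ℕ} (A0 : Matrix ι ι ℝ) (b0 : ι → ℝ) (c0 : ℝ)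
    (A : Fin m → Matrix ι ι ℝ) (b : Fin m → ι → ℝ) (c : Fin m → ℝ)
    (g : Fin m → ℝ) (x : ι → ℝ) : ℝ :=
  quadF A0 b0 c0 x + ∑ i, g i * quadF (A i) (b i) (c i) x

/-- The projected SDP relaxation `S_SDP = {(x,t) : q(x) - 2t e₀ ∈ Γ°}`. -/
def SSDP {ι : Type*} [Fintype ι] {m : ℕ} (A0 : Matrix ι ι ℝ) (b0 : ι → ℝ) (c0 : ℝ)
    (A : Fin m → Matrix ι ι ℝ) (b : Fin m → ι → ℝ) (c : Fin m → ℝ) :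
    Set ((ι → ℝ) × ℝ) :=
  {p | qVec A0 b0 c0 A b c p.1 - (2 * p.2) • e0 ∈ polarCone (Gamma A0 A)}

/-- The QCQP epigraph `S = {(x,t) : q₀(x) ≤ 2t, q i (x) ≤ 0 ∀ i}`. -/
def Sepi {ι : Type*} [Fintype ι] {m : ℕ} (A0 : Matrix ι ι ℝ) (b0 : ι → ℝ) (c0 : ℝ)
    (A : Fin m → Matrix ι ι ℝ) (b : Fin m → ι → ℝ) (c : Fin m → ℝ) :
    Set ((ι → ℝ) × ℝ) :=
  {p | quadF A0 b0 c0 p.1 ≤ 2 * p.2 ∧ ∀ i, quadF (A i) (b i) (c i) p.1 ≤ 0}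

/-- `F` is a face of the convex cone `K`. -/
def IsFaceOf {E : Type*} [Add E] (K F : Set E) : Prop :=
  F ⊆ K ∧ ∀ y ∈ K, ∀ z ∈ K, y + z ∈ F → y ∈ F ∧ z ∈ F

/-- `G` is the minimal face of `K` containing `v`. -/
def IsMinFace {E : Type*} [Add E] (K : Set E) (v : E) (G : Set E) : Prop :=
  IsFaceOf K G ∧ v ∈ G ∧ ∀ G', IsFaceOf K G' → v ∈ G' → G ⊆ G'

/-- The set of rounding directions `R(x,t)` at a point `p` of a convex set `C`. -/
def Rset {E : Type*} [AddCommGroup E] [Module ℝ E] (C : Set E) (p : E) : Set E :=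
  {d | ∃ ε : ℝ, 0 < ε ∧ ∀ s ∈ Set.Icc (-ε) ε, p + s • d ∈ C}

/-- The first-order rounding directions `R'(x,t)`, relative to a face `G` of `Γ°`. -/
def Rset' {ι : Type*} [Fintype ι] {m : ℕ} (A0 : Matrix ι ι ℝ) (b0 : ι → ℝ) (c0 : ℝ)
    (A : Fin m → Matrix ι ι ℝ) (b : Fin m → ι → ℝ) (c : Fin m → ℝ)
    (x : ι → ℝ) (t : ℝ) (G : Set (ℝ × (Fin m → ℝ))) : Set ((ι → ℝ) × ℝ) :=
  {d | ∀ α : ℝ,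
    qVec A0 b0 c0 A b c (x + α • d.1) - (2 * (t + α * d.2)) • e0 ∈ Submodule.span ℝ G}

/-- Orthogonal complement (as a set) of a subset of `ℝ^{1+m}` w.r.t. `ipr`. -/
def orthC {m : ℕ} (G : Set (ℝ × (Fin m → ℝ))) : Set (ℝ × (Fin m → ℝ)) :=
  {v | ∀ w ∈ G, ipr v w = 0}

-- quadratic form of Amix
lemma amix_qform {ι : Type*} [Fintype ι] {m : ℕ} (A0 : Matrix ι ι ℝ)
    (A : Fin m → Matrix ι ι ℝ) (g0 : ℝ) (g : Fin m → ℝ) (x : ι → ℝ) :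
    x ⬝ᵥ (Amix A0 A g0 g) *ᵥ x
      = g0 * (x ⬝ᵥ A0 *ᵥ x) + ∑ i, g i * (x ⬝ᵥ (A i) *ᵥ x) := by
  have hs : ∀ s : Finset (Fin m),
      x ⬝ᵥ (∑ i ∈ s, g i • A i) *ᵥ x = ∑ i ∈ s, g i * (x ⬝ᵥ (A i) *ᵥ x) := by
    intro s
    induction s using Finset.induction with
    | empty => simp
    | insert _ _ hns ih =>
        rw [Finset.sum_insert hns, Finset.sum_insert hns, add_mulVec, dotProduct_add,
          smul_mulVec, dotProduct_smul, smul_eq_mul, ih]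
  simp [Amix, add_mulVec, dotProduct_add, smul_mulVec, dotProduct_smul,
    smul_eq_mul, hs Finset.univ]

lemma amix_herm {ι : Type*} [Fintype ι] {m : ℕ} {A0 : Matrix ι ι ℝ}
    {A : Fin m → Matrix ι ι ℝ} (hA0 : A0.IsSymm) (hA : ∀ i, (A i).IsSymm)
    (g0 : ℝ) (g : Fin m → ℝ) : (Amix A0 A g0 g).IsHermitian := by
  rw [Matrix.IsHermitian, conjTranspose_eq_transpose_of_trivial, Amix,
    transpose_add, transpose_smul, hA0, transpose_sum]
  congr 1
  refine Finset.sum_congr rfl fun i _ => ?_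
  rw [transpose_smul, hA i]

lemma amix_psd_iff {ι : Type*} [Fintype ι] {m : ℕ} {A0 : Matrix ι ι ℝ}
    {A : Fin m → Matrix ι ι ℝ} (hA0 : A0.IsSymm) (hA : ∀ i, (A i).IsSymm)
    (g0 : ℝ) (g : Fin m → ℝ) :
    (Amix A0 A g0 g).PosSemidef ↔ ∀ x : ι → ℝ, 0 ≤ x ⬝ᵥ (Amix A0 A g0 g) *ᵥ x := by
  constructor
  · intro hp x; simpa using hp.dotProduct_mulVec_nonneg x
  · intro hx; exact .of_dotProduct_mulVec_nonneg (amix_herm hA0 hA g0 g) fun x => by simpa using hx x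

/-- under dual strict feasibility, `Γ` is the closed conic hull of
`{(1,γ) : γ ∈ Γ₁}`. -/
theorem stmt2 {n m : ℕ} (A0 : Matrix (Fin n) (Fin n) ℝ)
    (A : Fin m → Matrix (Fin n) (Fin n) ℝ)
    (hA0 : A0.IsSymm) (hA : ∀ i, (A i).IsSymm)
    (h : ∃ g : Fin m → ℝ, (∀ i, 0 ≤ g i) ∧ (Amix A0 A 1 g).PosDef) :
    Gamma A0 A =
      closure {p : ℝ × (Fin m → ℝ) |
        ∃ l : ℝ, 0 ≤ l ∧ ∃ g ∈ Gamma1 A0 A, p = l • ((1 : ℝ), g)} := by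
  obtain ⟨gs, hgs0, hgsd⟩ := h
  set S : Set (ℝ × (Fin m → ℝ)) :=
    {p : ℝ × (Fin m → ℝ) | ∃ l : ℝ, 0 ≤ l ∧ ∃ g ∈ Gamma1 A0 A, p = l • ((1 : ℝ), g)}
  -- Γ is closed
  have hclosed : IsClosed (Gamma A0 A) := by
    have : Gamma A0 A = {p : ℝ × (Fin m → ℝ) | 0 ≤ p.1} ∩
        ({p | ∀ i, 0 ≤ p.2 i} ∩
         ⋂ x : Fin n → ℝ, {p : ℝ × (Fin m → ℝ) |
            0 ≤ p.1 * (x ⬝ᵥ A0 *ᵥ x) + ∑ i, p.2 i * (x ⬝ᵥ (A i) *ᵥ x)}) := by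
      ext p
      simp only [Gamma, mem_setOf_eq, mem_inter_iff, mem_iInter, mem_setOf_eq]
      constructor
      · rintro ⟨h1, h2, h3⟩
        refine ⟨h1, h2, fun x => ?_⟩
        have := ((amix_psd_iff hA0 hA _ _).mp h3) x
        rwa [amix_qform] at this
      · rintro ⟨h1, h2, h3⟩
        refine ⟨h1, h2, (amix_psd_iff hA0 hA _ _).mpr fun x => ?_⟩
        rw [amix_qform]
        exact h3 x
    rw [this]
    refine (isClosed_le continuous_const continuous_fst).inter (IsClosed.inter ?_ ?_)
    · have : {p : ℝ × (Fin m → ℝ) | ∀ i, 0 ≤ p.2 i} = ⋂ i, {p : ℝ × (Fin m → ℝ) | 0 ≤ p.2 i} := by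
        ext q; simp
      rw [this]
      refine isClosed_iInter fun i => isClosed_le continuous_const ?_
      exact (continuous_apply i).comp continuous_snd
    · refine isClosed_iInter fun x => isClosed_le continuous_const ?_
      refine Continuous.add (continuous_fst.mul continuous_const) ?_
      exact continuous_finset_sum _ fun i _ => by fun_prop
  apply Subset.antisymm
  · -- Γ ⊆ closure S via perturbation
    intro p hp
    have hseq : ∀ k : ℕ, p + ((k : ℝ) + 1)⁻¹ • ((1 : ℝ), gs) ∈ S := by
      intro k
      set ε : ℝ := ((k : ℝ) + 1)⁻¹ with hε
      have hεpos : 0 < ε := by positivity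
      set l : ℝ := p.1 + ε with hl
      have hlpos : 0 < l := by have := hp.1; simp only [hl]; linarith
      refine ⟨l, hlpos.le, l⁻¹ • (p.2 + ε • gs), ?_, ?_⟩
      · constructor
        · intro i
          have : 0 ≤ p.2 i + ε * gs i := by
            have := hp.2.1 i; have := hgs0 i; positivity
          simp only [Pi.smul_apply, Pi.add_apply, smul_eq_mul]
          positivity
        · rw [amix_psd_iff hA0 hA]
          intro x
          have h1 : 0 ≤ x ⬝ᵥ (Amix A0 A p.1 p.2) *ᵥ x := by simpa using hp.2.2.dotProduct_mulVec_nonneg x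
          have h2 : 0 ≤ x ⬝ᵥ (Amix A0 A 1 gs) *ᵥ x := by simpa using hgsd.posSemidef.dotProduct_mulVec_nonneg x
          rw [amix_qform] at h1 h2 ⊢
          have hll : l⁻¹ * l = 1 := inv_mul_cancel₀ hlpos.ne'
          have key : 1 * (x ⬝ᵥ A0 *ᵥ x) + ∑ i, (l⁻¹ • (p.2 + ε • gs)) i * (x ⬝ᵥ (A i) *ᵥ x)
              = l⁻¹ * ((p.1 * (x ⬝ᵥ A0 *ᵥ x) + ∑ i, p.2 i * (x ⬝ᵥ (A i) *ᵥ x))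
                + ε * (1 * (x ⬝ᵥ A0 *ᵥ x) + ∑ i, gs i * (x ⬝ᵥ (A i) *ᵥ x))) := by
            simp only [Pi.smul_apply, Pi.add_apply, smul_eq_mul]
            have hsum : ∑ i, l⁻¹ * (p.2 i + ε * gs i) * (x ⬝ᵥ (A i) *ᵥ x)
                = l⁻¹ * (∑ i, p.2 i * (x ⬝ᵥ (A i) *ᵥ x)
                    + ε * ∑ i, gs i * (x ⬝ᵥ (A i) *ᵥ x)) := by
              rw [show ∑ i, l⁻¹ * (p.2 i + ε * gs i) * (x ⬝ᵥ (A i) *ᵥ x)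
                  = ∑ i, (l⁻¹ * (p.2 i * (x ⬝ᵥ (A i) *ᵥ x))
                      + l⁻¹ * ε * (gs i * (x ⬝ᵥ (A i) *ᵥ x))) from
                Finset.sum_congr rfl fun i _ => by ring]
              rw [Finset.sum_add_distrib, ← Finset.mul_sum, ← Finset.mul_sum]
              ring
            rw [hsum]
            have hll' : l⁻¹ * (p.1 + ε) = 1 := by rw [← hl]; exact hll
            linear_combination (-(x ⬝ᵥ A0 *ᵥ x)) * hll'
          rw [key]
          have h3 : 0 ≤ ε * (1 * (x ⬝ᵥ A0 *ᵥ x) + ∑ i, gs i * (x ⬝ᵥ (A i) *ᵥ x)) :=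
            mul_nonneg hεpos.le h2
          positivity
      · have hll : l * l⁻¹ = 1 := mul_inv_cancel₀ hlpos.ne'
        ext
        · simp [hll, hl]
        · simp only [Prod.smul_snd, Pi.add_apply, Pi.smul_apply, Prod.fst_add, Prod.snd_add,
            smul_eq_mul, Prod.smul_fst]
          rw [← mul_assoc, hll]
          ring
    have h0 : Filter.Tendsto (fun k : ℕ => ((k : ℝ) + 1)⁻¹) Filter.atTop (nhds 0) := by
      simpa [one_div] using tendsto_one_div_add_atTop_nhds_zero_nat (𝕜 := ℝ)
    have ht : Filter.Tendsto (fun k : ℕ => p + ((k : ℝ) + 1)⁻¹ • ((1 : ℝ), gs))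
        Filter.atTop (nhds p) := by
      have := (h0.smul_const ((1 : ℝ), gs)).const_add p
      simpa using this
    exact mem_closure_of_tendsto ht (Filter.Eventually.of_forall hseq)
  · -- closure S ⊆ Γ
    refine closure_minimal ?_ hclosed
    rintro p ⟨l, hl, g, ⟨hg0, hgpsd⟩, rfl⟩
    refine ⟨by simpa using hl, fun i => by
      simpa using mul_nonneg hl (hg0 i), ?_⟩
    rw [amix_psd_iff hA0 hA]
    intro x
    have h2 : 0 ≤ x ⬝ᵥ (Amix A0 A 1 g) *ᵥ x := by simpa using hgpsd.dotProduct_mulVec_nonneg x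
    rw [amix_qform] at h2 ⊢
    simp only [Prod.smul_fst, Prod.smul_snd, Pi.smul_apply, smul_eq_mul]
    have heq : l * 1 * (x ⬝ᵥ A0 *ᵥ x) + ∑ i, l * g i * (x ⬝ᵥ (A i) *ᵥ x)
        = l * (1 * (x ⬝ᵥ A0 *ᵥ x) + ∑ i, g i * (x ⬝ᵥ (A i) *ᵥ x)) := by
      rw [mul_add, Finset.mul_sum]
      congr 1
      · ring
      · exact Finset.sum_congr rfl fun i _ => by ring
    rw [heq]
    exact mul_nonneg hl h2
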